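/- For every integer i ≥ 2 and μ, ν ∈ {0,1}, the weighted blow-up G_i^{μν} = Υ_i^{μν}(ω_{μν}) of the Vega graph Υ_i^{μν} is a k-regular graph on 3k−1 vertices, where k = 9i − (6 + μ + ν). -/

import Mathlib

open Finset

/-- Base adjacency relation for the Vega graph: vertices are the vertices of the
Andrasfai graph (inl) together with x,y,a,b,c,u,v,w coded as inr 0,...,inr 7. -/
def vegaBase (i : ℕ) : (Fin (3 * i - 1) ⊕ Fin 8) → (Fin (3 * i - 1) ⊕ Fin 8) → Prop
  | Sum.inl j, Sum.inl l =>
      (l.val + (3 * i - 1) - j.val) % (3 * i - 1) ∈ Finset.Icc i (2 * i - 1)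
  | Sum.inr h, Sum.inl j =>
      ((h = 2 ∨ h = 5) ∧ j.val < i) ∨
      ((h = 3 ∨ h = 6) ∧ i ≤ j.val ∧ j.val < 2 * i) ∨
      ((h = 4 ∨ h = 7) ∧ 2 * i ≤ j.val)
  | Sum.inl _, Sum.inr _ => False
  | Sum.inr h, Sum.inr h' =>
      (h = 0 ∧ h' = 1) ∨ (h = 2 ∧ h' = 6) ∨ (h = 6 ∧ h' = 4) ∨ (h = 4 ∧ h' = 5) ∨
      (h = 5 ∧ h' = 3) ∨ (h = 3 ∧ h' = 7) ∨ (h = 7 ∧ h' = 2) ∨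
      (h = 0 ∧ h' = 2) ∨ (h = 0 ∧ h' = 3) ∨ (h = 0 ∧ h' = 4) ∨
      (h = 1 ∧ h' = 5) ∨ (h = 1 ∧ h' = 6) ∨ (h = 1 ∧ h' = 7)

/-- The Vega graph Υ_i^{00}. -/
def vega (i : ℕ) : SimpleGraph (Fin (3 * i - 1) ⊕ Fin 8) where
  Adj z z' := z ≠ z' ∧ (vegaBase i z z' ∨ vegaBase i z' z)
  symm := ⟨fun _ _ h => ⟨h.1.symm, h.2.symm⟩⟩
  loopless := ⟨fun _ h => h.1 rfl⟩

/-- The weight ω_{00}. -/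
def vegaW00 (i : ℕ) : (Fin (3 * i - 1) ⊕ Fin 8) → ℤ
  | Sum.inl j => if j.val = 0 ∨ j.val = 2 * i - 1 then 1 else 3
  | Sum.inr h => if h = 0 ∨ h = 1 then 1
      else if h = 4 ∨ h = 7 then 3 * (i : ℤ) - 3 else 3 * (i : ℤ) - 2

/-- The correction function f (1 on u,v,w,y; -1 on x). -/
def vegaF (i : ℕ) : (Fin (3 * i - 1) ⊕ Fin 8) → ℤ
  | Sum.inl _ => 0
  | Sum.inr h => if h = 1 ∨ h = 5 ∨ h = 6 ∨ h = 7 then 1 else if h = 0 then -1 else 0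

/-- The correction function g (1 on b, v, v_{i-1}, v_{2i-1}; -1 on v_0). -/
def vegaG (i : ℕ) : (Fin (3 * i - 1) ⊕ Fin 8) → ℤ
  | Sum.inl j => if j.val = i - 1 ∨ j.val = 2 * i - 1 then 1
      else if j.val = 0 then -1 else 0
  | Sum.inr h => if h = 3 ∨ h = 6 then 1 else 0

/-- The weight ω_{μν} = ω_{00} - μ f - ν g. -/
def vegaW (i μ ν : ℕ) (z : Fin (3 * i - 1) ⊕ Fin 8) : ℤ :=
  vegaW00 i z - μ * vegaF i z - ν * vegaG i z

/-- The blow-up of a graph `F` with class sizes given by `w`. -/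
def SimpleGraph.blowup {α : Type*} (F : SimpleGraph α) (w : α → ℕ) :
    SimpleGraph (Σ a, Fin (w a)) where
  Adj x y := F.Adj x.1 y.1
  symm := ⟨fun _ _ h => F.symm.symm _ _ h⟩
  loopless := ⟨fun x h => F.loopless.irrefl x.1 h⟩

-- aux lemmas, stage 1
section Aux
open scoped Classical

lemma mod2 (a n : ℕ) (h : a < 2 * n) : a % n = if a < n then a else a - n := by
  split_ifs with h1
  · exact Nat.mod_eq_of_lt h1
  · rw [Nat.mod_eq_sub_mod (by omega)]
    exact Nat.mod_eq_of_lt (by omega)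

lemma modadd (x y n : ℕ) (hx : x < n) (hy : y < n) : ((x + y) % n + n - y) % n = x := by
  rw [mod2 (x+y) n (by omega)]
  split_ifs with h
  · rw [mod2 _ n (by omega)]; split_ifs <;> omega
  · rw [mod2 _ n (by omega)]; split_ifs <;> omega

lemma vega_adj (i : ℕ) (z z' : Fin (3 * i - 1) ⊕ Fin 8) :
    (vega i).Adj z z' ↔ z ≠ z' ∧ (vegaBase i z z' ∨ vegaBase i z' z) := Iff.rfl

lemma base_ll (i : ℕ) (j l : Fin (3 * i - 1)) :
    vegaBase i (Sum.inl j) (Sum.inl l)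
      = ((l.val + (3 * i - 1) - j.val) % (3 * i - 1) ∈ Finset.Icc i (2 * i - 1)) := rfl

lemma base_rl (i : ℕ) (h : Fin 8) (j : Fin (3 * i - 1)) :
    vegaBase i (Sum.inr h) (Sum.inl j)
      = (((h = 2 ∨ h = 5) ∧ j.val < i) ∨
      ((h = 3 ∨ h = 6) ∧ i ≤ j.val ∧ j.val < 2 * i) ∨
      ((h = 4 ∨ h = 7) ∧ 2 * i ≤ j.val)) := rfl

lemma base_lr (i : ℕ) (h : Fin 8) (j : Fin (3 * i - 1)) :
    vegaBase i (Sum.inl j) (Sum.inr h) = False := rfl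

lemma C_iff (i : ℕ) (hi : 2 ≤ i) (p j : ℕ) (hp : p < 3 * i - 1) (hj : j < 3 * i - 1) :
    ((p + (3 * i - 1) - j) % (3 * i - 1) ∈ Finset.Icc i (2 * i - 1)) ↔
      ((j ≤ p ∧ i ≤ p - j ∧ p - j ≤ 2 * i - 1) ∨
       (p < j ∧ i ≤ p + (3 * i - 1) - j ∧ p + (3 * i - 1) - j ≤ 2 * i - 1)) := by
  rw [Finset.mem_Icc, mod2 _ _ (by omega)]
  split_ifs with h <;> omega

lemma adj_inl_inl (i : ℕ) (hi : 2 ≤ i) (j l : Fin (3 * i - 1)) :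
    (vega i).Adj (Sum.inl j) (Sum.inl l) ↔
      (l.val + (3 * i - 1) - j.val) % (3 * i - 1) ∈ Finset.Icc i (2 * i - 1) := by
  have hj := j.isLt; have hl := l.isLt
  rw [vega_adj, base_ll, base_ll, C_iff i hi l.val j.val hl hj, C_iff i hi j.val l.val hj hl]
  constructor
  · rintro ⟨hne, h | h⟩ <;> omega
  · intro h
    refine ⟨fun he => ?_, Or.inl (by omega)⟩
    have : j.val = l.val := by rw [Sum.inl.inj he]
    omega

lemma adj_inr_inl (i : ℕ) (h : Fin 8) (j : Fin (3 * i - 1)) :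
    (vega i).Adj (Sum.inr h) (Sum.inl j) ↔
      (((h = 2 ∨ h = 5) ∧ j.val < i) ∨
      ((h = 3 ∨ h = 6) ∧ i ≤ j.val ∧ j.val < 2 * i) ∨
      ((h = 4 ∨ h = 7) ∧ 2 * i ≤ j.val)) := by
  rw [vega_adj, base_rl, base_lr]
  simp

end Aux

section Aux2
open scoped Classical

lemma modsub (x y n : ℕ) (hx : x < n) (hy : y < n) : ((x + n - y) % n + y) % n = x := by
  rw [mod2 (x + n - y) n (by omega)]
  split_ifs with h
  · rw [mod2 _ n (by omega)]; split_ifs <;> omega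
  · rw [mod2 _ n (by omega)]; split_ifs <;> omega

lemma vegaW_nonneg (i μ ν : ℕ) (hi : 2 ≤ i) (hμ : μ ≤ 1) (hν : ν ≤ 1) (z) :
    0 ≤ vegaW i μ ν z := by
  rcases z with j | h
  · simp only [vegaW, vegaW00, vegaF, vegaG]
    split_ifs <;> push_cast <;> omega
  · simp only [vegaW, vegaW00, vegaF, vegaG]
    split_ifs <;> push_cast <;> omega

lemma wl (i μ ν : ℕ) (hi : 2 ≤ i) (l : Fin (3 * i - 1)) :
    vegaW i μ ν (Sum.inl l) = 3 + (if l.val = 0 then (ν : ℤ) - 2 else 0)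
      + (if l.val = i - 1 then -(ν : ℤ) else 0)
      + (if l.val = 2 * i - 1 then -(ν : ℤ) - 2 else 0) := by
  have := l.isLt
  simp only [vegaW, vegaW00, vegaF, vegaG]
  split_ifs <;> push_cast <;> omega

lemma sum_point (n p : ℕ) (hp : p < n) (P : ℕ → Prop) [DecidablePred P] (c : ℤ) :
    (∑ q ∈ Finset.range n, if P q then (if q = p then c else 0) else 0)
      = if P p then c else 0 := by
  rw [Finset.sum_eq_single_of_mem p (Finset.mem_range.2 hp)]
  · simp
  · intro q _ hq
    simp [hq]

lemma engine (i μ ν : ℕ) (hi : 2 ≤ i) (P : ℕ → Prop) [DecidablePred P] :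
    (∑ l : Fin (3 * i - 1), if P l.val then vegaW i μ ν (Sum.inl l) else 0)
      = 3 * (((Finset.range (3 * i - 1)).filter P).card : ℤ)
        + (if P 0 then (ν : ℤ) - 2 else 0) + (if P (i - 1) then -(ν : ℤ) else 0)
        + (if P (2 * i - 1) then -(ν : ℤ) - 2 else 0) := by
  have step1 : (∑ l : Fin (3 * i - 1), if P l.val then vegaW i μ ν (Sum.inl l) else 0)
      = ∑ q ∈ Finset.range (3 * i - 1),
          ((if P q then (3 : ℤ) else 0) + (if P q then (if q = 0 then (ν : ℤ) - 2 else 0) else 0)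
            + (if P q then (if q = i - 1 then -(ν : ℤ) else 0) else 0)
            + (if P q then (if q = 2 * i - 1 then -(ν : ℤ) - 2 else 0) else 0)) := by
    rw [← Fin.sum_univ_eq_sum_range]
    apply Finset.sum_congr rfl
    intro l _
    rw [wl i μ ν hi l]
    split_ifs <;> ring
  rw [step1]
  rw [Finset.sum_add_distrib, Finset.sum_add_distrib, Finset.sum_add_distrib]
  rw [sum_point _ 0 (by omega) P, sum_point _ (i - 1) (by omega) P,
    sum_point _ (2 * i - 1) (by omega) P]
  congr 1
  congr 2
  rw [← Finset.sum_filter, Finset.sum_const, nsmul_eq_mul, mul_comm]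

lemma card_C (i : ℕ) (hi : 2 ≤ i) (j : ℕ) (hj : j < 3 * i - 1) :
    (((Finset.range (3 * i - 1)).filter
        (fun l => (l + (3 * i - 1) - j) % (3 * i - 1) ∈ Finset.Icc i (2 * i - 1))).card = i) := by
  have hn : 0 < 3 * i - 1 := by omega
  have key : (((Finset.range (3 * i - 1)).filter
        (fun l => (l + (3 * i - 1) - j) % (3 * i - 1) ∈ Finset.Icc i (2 * i - 1))).card
      = (Finset.Icc i (2 * i - 1)).card) := by
    apply Finset.card_nbij' (fun l => (l + (3 * i - 1) - j) % (3 * i - 1))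
        (fun m => (m + j) % (3 * i - 1))
    · intro l hl
      exact (Finset.mem_filter.1 hl).2
    · intro m hm
      rw [Finset.mem_coe, Finset.mem_Icc] at hm
      refine Finset.mem_filter.2 ⟨Finset.mem_range.2 (Nat.mod_lt _ hn), ?_⟩
      rw [modadd m j _ (by omega) hj, Finset.mem_Icc]
      omega
    · intro l hl
      exact modsub l j _ (Finset.mem_range.1 (Finset.mem_filter.1 hl).1) hj
    · intro m hm
      rw [Finset.mem_coe, Finset.mem_Icc] at hm
      exact modadd m j _ (by omega) hj
  rw [key, Nat.card_Icc]
  omega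

end Aux2

section Aux3
open scoped Classical

lemma blowup_card_nbhd {α : Type*} [Fintype α] (F : SimpleGraph α) (w : α → ℕ)
    (x : Σ a, Fin (w a)) :
    Fintype.card ((F.blowup w).neighborSet x) = ∑ a ∈ Finset.univ.filter (F.Adj x.1), w a := by
  have e : ((F.blowup w).neighborSet x) ≃ (Σ a : {a // F.Adj x.1 a}, Fin (w a.1)) :=
    { toFun := fun y => ⟨⟨y.1.1, y.2⟩, y.1.2⟩
      invFun := fun p => ⟨⟨p.1.1, p.2⟩, p.1.2⟩
      left_inv := fun y => rfl
      right_inv := fun p => rfl }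
  rw [Fintype.card_congr e, Fintype.card_sigma]
  simp only [Fintype.card_fin]
  rw [← Finset.sum_subtype (p := F.Adj x.1) (Finset.univ.filter (F.Adj x.1))
    (by intro a; simp) (fun a => w a)]

lemma blowup_degree {α : Type*} [Fintype α] (F : SimpleGraph α) (w : α → ℕ)
    (x : Σ a, Fin (w a)) [Fintype ((F.blowup w).neighborSet x)] :
    (F.blowup w).degree x = ∑ a ∈ Finset.univ.filter (F.Adj x.1), w a := by
  rw [← SimpleGraph.card_neighborSet_eq_degree]
  convert blowup_card_nbhd F w x using 2

end Aux3

section Aux4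
open scoped Classical

lemma base_rr (i : ℕ) (h h' : Fin 8) :
    vegaBase i (Sum.inr h) (Sum.inr h') =
      ((h = 0 ∧ h' = 1) ∨ (h = 2 ∧ h' = 6) ∨ (h = 6 ∧ h' = 4) ∨ (h = 4 ∧ h' = 5) ∨
      (h = 5 ∧ h' = 3) ∨ (h = 3 ∧ h' = 7) ∨ (h = 7 ∧ h' = 2) ∨
      (h = 0 ∧ h' = 2) ∨ (h = 0 ∧ h' = 3) ∨ (h = 0 ∧ h' = 4) ∨
      (h = 1 ∧ h' = 5) ∨ (h = 1 ∧ h' = 6) ∨ (h = 1 ∧ h' = 7)) := rfl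

lemma sumLo (i μ ν : ℕ) (hi : 2 ≤ i) (hν : ν ≤ 1) :
    (∑ l : Fin (3 * i - 1), if l.val < i then vegaW i μ ν (Sum.inl l) else 0)
      = 3 * (i : ℤ) - 2 := by
  rw [engine i μ ν hi (fun q => q < i)]
  have hc : ((Finset.range (3 * i - 1)).filter (fun q => q < i)) = Finset.range i := by
    ext q; simp [Finset.mem_filter, Finset.mem_range]; omega
  rw [hc, Finset.card_range, if_pos (by omega : 0 < i), if_pos (by omega : i - 1 < i),
    if_neg (by omega : ¬ 2 * i - 1 < i)]
  push_cast; ring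

lemma sumMid (i μ ν : ℕ) (hi : 2 ≤ i) (hν : ν ≤ 1) :
    (∑ l : Fin (3 * i - 1), if i ≤ l.val ∧ l.val < 2 * i then vegaW i μ ν (Sum.inl l) else 0)
      = 3 * (i : ℤ) - 2 - ν := by
  rw [engine i μ ν hi (fun q => i ≤ q ∧ q < 2 * i)]
  have hc : ((Finset.range (3 * i - 1)).filter (fun q => i ≤ q ∧ q < 2 * i))
      = Finset.Ico i (2 * i) := by
    ext q; simp [Finset.mem_filter, Finset.mem_range, Finset.mem_Ico]; omega
  rw [hc, Nat.card_Ico, if_neg (by omega : ¬(i ≤ 0 ∧ 0 < 2 * i)),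
    if_neg (by omega : ¬(i ≤ i - 1 ∧ i - 1 < 2 * i)),
    if_pos (by omega : i ≤ 2 * i - 1 ∧ 2 * i - 1 < 2 * i)]
  have : 2 * i - i = i := by omega
  rw [this]; push_cast; ring

lemma sumHi (i μ ν : ℕ) (hi : 2 ≤ i) (hν : ν ≤ 1) :
    (∑ l : Fin (3 * i - 1), if 2 * i ≤ l.val then vegaW i μ ν (Sum.inl l) else 0)
      = 3 * (i : ℤ) - 3 := by
  rw [engine i μ ν hi (fun q => 2 * i ≤ q)]
  have hc : ((Finset.range (3 * i - 1)).filter (fun q => 2 * i ≤ q))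
      = Finset.Ico (2 * i) (3 * i - 1) := by
    ext q; simp [Finset.mem_filter, Finset.mem_range, Finset.mem_Ico]; omega
  rw [hc, Nat.card_Ico, if_neg (by omega : ¬ 2 * i ≤ 0),
    if_neg (by omega : ¬ 2 * i ≤ i - 1), if_neg (by omega : ¬ 2 * i ≤ 2 * i - 1)]
  have : 3 * i - 1 - 2 * i = i - 1 := by omega
  rw [this]; push_cast [Nat.cast_sub (by omega : 1 ≤ i)]; ring

lemma sumC (i μ ν : ℕ) (hi : 2 ≤ i) (j : Fin (3 * i - 1)) :
    (∑ l : Fin (3 * i - 1),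
        if (vega i).Adj (Sum.inl j) (Sum.inl l) then vegaW i μ ν (Sum.inl l) else 0)
      = 3 * (i : ℤ)
        + (if (0 + (3 * i - 1) - j.val) % (3 * i - 1) ∈ Finset.Icc i (2 * i - 1)
            then (ν : ℤ) - 2 else 0)
        + (if (i - 1 + (3 * i - 1) - j.val) % (3 * i - 1) ∈ Finset.Icc i (2 * i - 1)
            then -(ν : ℤ) else 0)
        + (if (2 * i - 1 + (3 * i - 1) - j.val) % (3 * i - 1) ∈ Finset.Icc i (2 * i - 1)
            then -(ν : ℤ) - 2 else 0) := by
  have step : (∑ l : Fin (3 * i - 1),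
        if (vega i).Adj (Sum.inl j) (Sum.inl l) then vegaW i μ ν (Sum.inl l) else 0)
      = ∑ l : Fin (3 * i - 1),
        if (l.val + (3 * i - 1) - j.val) % (3 * i - 1) ∈ Finset.Icc i (2 * i - 1)
          then vegaW i μ ν (Sum.inl l) else 0 :=
    Finset.sum_congr rfl fun l _ => if_congr (adj_inl_inl i hi j l) rfl rfl
  rw [step, engine i μ ν hi (fun q => (q + (3 * i - 1) - j.val) % (3 * i - 1)
    ∈ Finset.Icc i (2 * i - 1)), card_C i hi j.val j.isLt]

end Aux4

section Aux5
open scoped Classical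

lemma degsum_l (i μ ν : ℕ) (hi : 2 ≤ i) (hμ : μ ≤ 1) (hν : ν ≤ 1) (j : Fin (3 * i - 1))
    (hz : 0 < vegaW i μ ν (Sum.inl j)) :
    (∑ a : Fin (3 * i - 1) ⊕ Fin 8, if (vega i).Adj (Sum.inl j) a then vegaW i μ ν a else 0)
      = 9 * (i : ℤ) - 6 - μ - ν := by
  rw [Fintype.sum_sum_type]
  rw [sumC i μ ν hi j]
  rw [Fin.sum_univ_eight]
  have hlr : ∀ c : Fin 8, (vega i).Adj (Sum.inl j) (Sum.inr c) ↔
      (((c = 2 ∨ c = 5) ∧ j.val < i) ∨ ((c = 3 ∨ c = 6) ∧ i ≤ j.val ∧ j.val < 2 * i) ∨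
        ((c = 4 ∨ c = 7) ∧ 2 * i ≤ j.val)) := fun c => by
    rw [vega_adj]
    rw [base_lr, base_rl]
    simp
  simp (config := { decide := true }) only [hlr, false_and, false_or, true_and, and_false,
    or_false, if_false]
  have hjl := j.isLt
  have c0 := C_iff i hi 0 j.val (by omega) hjl
  have c1 := C_iff i hi (i - 1) j.val (by omega) hjl
  have c2 := C_iff i hi (2 * i - 1) j.val (by omega) hjl
  rcases (by omega : j.val ≤ i - 1 ∨ (i ≤ j.val ∧ j.val ≤ 2 * i - 2) ∨ j.val = 2 * i - 1 ∨
      2 * i ≤ j.val) with h | h | h | h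
  · have d0 : ¬ (0 + (3 * i - 1) - j.val) % (3 * i - 1) ∈ Finset.Icc i (2 * i - 1) := by
      rw [c0]; omega
    have d1 : ¬ (i - 1 + (3 * i - 1) - j.val) % (3 * i - 1) ∈ Finset.Icc i (2 * i - 1) := by
      rw [c1]; omega
    have d2 : (2 * i - 1 + (3 * i - 1) - j.val) % (3 * i - 1) ∈ Finset.Icc i (2 * i - 1) := by
      rw [c2]; omega
    simp only [if_pos d2, if_neg d0, if_neg d1, if_pos (show j.val < i by omega),
      if_neg (show ¬ (i ≤ j.val ∧ j.val < 2 * i) by omega),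
      if_neg (show ¬ 2 * i ≤ j.val by omega)]
    simp only [vegaW, vegaW00, vegaF, vegaG]
    simp (config := { decide := true }) only [false_or, true_or, or_true, if_true, if_false,
      false_and, true_and, and_true, and_false, or_false]
    norm_num
    push_cast
    omega
  · have d0 : (0 + (3 * i - 1) - j.val) % (3 * i - 1) ∈ Finset.Icc i (2 * i - 1) := by
      rw [c0]; omega
    have d1 : ¬ (i - 1 + (3 * i - 1) - j.val) % (3 * i - 1) ∈ Finset.Icc i (2 * i - 1) := by
      rw [c1]; omega
    have d2 : ¬ (2 * i - 1 + (3 * i - 1) - j.val) % (3 * i - 1) ∈ Finset.Icc i (2 * i - 1) := by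
      rw [c2]; omega
    simp only [if_pos d0, if_neg d1, if_neg d2, if_neg (show ¬ j.val < i by omega),
      if_pos (show (i ≤ j.val ∧ j.val < 2 * i) by omega),
      if_neg (show ¬ 2 * i ≤ j.val by omega)]
    simp only [vegaW, vegaW00, vegaF, vegaG]
    simp (config := { decide := true }) only [false_or, true_or, or_true, if_true, if_false,
      false_and, true_and, and_true, and_false, or_false]
    norm_num
    push_cast
    omega
  · have hν0 : ν = 0 := by
      rw [wl i μ ν hi j] at hz
      rw [if_neg (show ¬ j.val = 0 by omega), if_neg (show ¬ j.val = i - 1 by omega),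
        if_pos h] at hz
      omega
    have d0 : (0 + (3 * i - 1) - j.val) % (3 * i - 1) ∈ Finset.Icc i (2 * i - 1) := by
      rw [c0]; omega
    have d1 : (i - 1 + (3 * i - 1) - j.val) % (3 * i - 1) ∈ Finset.Icc i (2 * i - 1) := by
      rw [c1]; omega
    have d2 : ¬ (2 * i - 1 + (3 * i - 1) - j.val) % (3 * i - 1) ∈ Finset.Icc i (2 * i - 1) := by
      rw [c2]; omega
    simp only [if_pos d0, if_pos d1, if_neg d2, if_neg (show ¬ j.val < i by omega),
      if_pos (show (i ≤ j.val ∧ j.val < 2 * i) by omega),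
      if_neg (show ¬ 2 * i ≤ j.val by omega)]
    simp only [vegaW, vegaW00, vegaF, vegaG]
    simp (config := { decide := true }) only [false_or, true_or, or_true, if_true, if_false,
      false_and, true_and, and_true, and_false, or_false]
    norm_num
    push_cast
    omega
  · have d0 : ¬ (0 + (3 * i - 1) - j.val) % (3 * i - 1) ∈ Finset.Icc i (2 * i - 1) := by
      rw [c0]; omega
    have d1 : (i - 1 + (3 * i - 1) - j.val) % (3 * i - 1) ∈ Finset.Icc i (2 * i - 1) := by
      rw [c1]; omega
    have d2 : ¬ (2 * i - 1 + (3 * i - 1) - j.val) % (3 * i - 1) ∈ Finset.Icc i (2 * i - 1) := by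
      rw [c2]; omega
    simp only [if_neg d0, if_pos d1, if_neg d2, if_neg (show ¬ j.val < i by omega),
      if_neg (show ¬ (i ≤ j.val ∧ j.val < 2 * i) by omega),
      if_pos (show 2 * i ≤ j.val by omega)]
    simp only [vegaW, vegaW00, vegaF, vegaG]
    simp (config := { decide := true }) only [false_or, true_or, or_true, if_true, if_false,
      false_and, true_and, and_true, and_false, or_false]
    norm_num
    push_cast
    omega

end Aux5

section Aux6
open scoped Classical

lemma degsum_r0 (i μ ν : ℕ) (hi : 2 ≤ i) (hμ : μ ≤ 1) (hν : ν ≤ 1)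
    (hz : 0 < vegaW i μ ν (Sum.inr 0)) :
    (∑ a : Fin (3 * i - 1) ⊕ Fin 8, if (vega i).Adj (Sum.inr 0) a then vegaW i μ ν a else 0)
      = 9 * (i : ℤ) - 6 - μ - ν := by
  rw [Fintype.sum_sum_type]
  have hL : (∑ l : Fin (3 * i - 1),
      if (vega i).Adj (Sum.inr 0) (Sum.inl l) then vegaW i μ ν (Sum.inl l) else 0) = 0 := by
    have e1 : (∑ l : Fin (3 * i - 1),
        if (vega i).Adj (Sum.inr 0) (Sum.inl l) then vegaW i μ ν (Sum.inl l) else 0)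
        = ∑ _l : Fin (3 * i - 1), (0 : ℤ) :=
      Finset.sum_congr rfl (fun l _ => if_neg (by rw [adj_inr_inl]; simp))
    rw [e1]
    simp
  rw [hL, Fin.sum_univ_eight]
  simp only [vega_adj, base_rr, ne_eq, Sum.inr.injEq]
  norm_num
  simp only [vegaW, vegaW00, vegaF, vegaG]
  norm_num
  try simp
  push_cast
  omega

lemma degsum_r1 (i μ ν : ℕ) (hi : 2 ≤ i) (hμ : μ ≤ 1) (hν : ν ≤ 1)
    (hz : 0 < vegaW i μ ν (Sum.inr 1)) :
    (∑ a : Fin (3 * i - 1) ⊕ Fin 8, if (vega i).Adj (Sum.inr 1) a then vegaW i μ ν a else 0)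
      = 9 * (i : ℤ) - 6 - μ - ν := by
  rw [Fintype.sum_sum_type]
  have hL : (∑ l : Fin (3 * i - 1),
      if (vega i).Adj (Sum.inr 1) (Sum.inl l) then vegaW i μ ν (Sum.inl l) else 0) = 0 := by
    have e1 : (∑ l : Fin (3 * i - 1),
        if (vega i).Adj (Sum.inr 1) (Sum.inl l) then vegaW i μ ν (Sum.inl l) else 0)
        = ∑ _l : Fin (3 * i - 1), (0 : ℤ) :=
      Finset.sum_congr rfl (fun l _ => if_neg (by rw [adj_inr_inl]; simp))
    rw [e1]
    simp
  rw [hL, Fin.sum_univ_eight]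
  simp only [vega_adj, base_rr, ne_eq, Sum.inr.injEq]
  norm_num
  have hμ0 : μ = 0 := by
    simp only [vegaW, vegaW00, vegaF, vegaG] at hz
    norm_num at hz
    omega
  simp only [vegaW, vegaW00, vegaF, vegaG]
  norm_num
  try simp
  push_cast
  omega

lemma degsum_r2 (i μ ν : ℕ) (hi : 2 ≤ i) (hμ : μ ≤ 1) (hν : ν ≤ 1)
    (hz : 0 < vegaW i μ ν (Sum.inr 2)) :
    (∑ a : Fin (3 * i - 1) ⊕ Fin 8, if (vega i).Adj (Sum.inr 2) a then vegaW i μ ν a else 0)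
      = 9 * (i : ℤ) - 6 - μ - ν := by
  rw [Fintype.sum_sum_type]
  have hL : (∑ l : Fin (3 * i - 1),
      if (vega i).Adj (Sum.inr 2) (Sum.inl l) then vegaW i μ ν (Sum.inl l) else 0)
      = 3 * (i : ℤ) - 2 := by
    have e1 : (∑ l : Fin (3 * i - 1),
        if (vega i).Adj (Sum.inr 2) (Sum.inl l) then vegaW i μ ν (Sum.inl l) else 0)
        = ∑ l : Fin (3 * i - 1), if l.val < i then vegaW i μ ν (Sum.inl l) else 0 :=
      Finset.sum_congr rfl (fun l _ => if_congr ((adj_inr_inl i 2 l).trans (by simp)) rfl rfl)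
    rw [e1]
    exact sumLo i μ ν hi hν
  rw [hL, Fin.sum_univ_eight]
  simp only [vega_adj, base_rr, ne_eq, Sum.inr.injEq]
  norm_num
  simp only [vegaW, vegaW00, vegaF, vegaG]
  norm_num
  try simp
  push_cast
  omega

lemma degsum_r3 (i μ ν : ℕ) (hi : 2 ≤ i) (hμ : μ ≤ 1) (hν : ν ≤ 1)
    (hz : 0 < vegaW i μ ν (Sum.inr 3)) :
    (∑ a : Fin (3 * i - 1) ⊕ Fin 8, if (vega i).Adj (Sum.inr 3) a then vegaW i μ ν a else 0)
      = 9 * (i : ℤ) - 6 - μ - ν := by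
  rw [Fintype.sum_sum_type]
  have hL : (∑ l : Fin (3 * i - 1),
      if (vega i).Adj (Sum.inr 3) (Sum.inl l) then vegaW i μ ν (Sum.inl l) else 0)
      = 3 * (i : ℤ) - 2 - ν := by
    have e1 : (∑ l : Fin (3 * i - 1),
        if (vega i).Adj (Sum.inr 3) (Sum.inl l) then vegaW i μ ν (Sum.inl l) else 0)
        = ∑ l : Fin (3 * i - 1), if i ≤ l.val ∧ l.val < 2 * i then vegaW i μ ν (Sum.inl l) else 0 :=
      Finset.sum_congr rfl (fun l _ => if_congr ((adj_inr_inl i 3 l).trans (by simp)) rfl rfl)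
    rw [e1]
    exact sumMid i μ ν hi hν
  rw [hL, Fin.sum_univ_eight]
  simp only [vega_adj, base_rr, ne_eq, Sum.inr.injEq]
  norm_num
  simp only [vegaW, vegaW00, vegaF, vegaG]
  norm_num
  try simp
  push_cast
  omega

lemma degsum_r4 (i μ ν : ℕ) (hi : 2 ≤ i) (hμ : μ ≤ 1) (hν : ν ≤ 1)
    (hz : 0 < vegaW i μ ν (Sum.inr 4)) :
    (∑ a : Fin (3 * i - 1) ⊕ Fin 8, if (vega i).Adj (Sum.inr 4) a then vegaW i μ ν a else 0)
      = 9 * (i : ℤ) - 6 - μ - ν := by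
  rw [Fintype.sum_sum_type]
  have hL : (∑ l : Fin (3 * i - 1),
      if (vega i).Adj (Sum.inr 4) (Sum.inl l) then vegaW i μ ν (Sum.inl l) else 0)
      = 3 * (i : ℤ) - 3 := by
    have e1 : (∑ l : Fin (3 * i - 1),
        if (vega i).Adj (Sum.inr 4) (Sum.inl l) then vegaW i μ ν (Sum.inl l) else 0)
        = ∑ l : Fin (3 * i - 1), if 2 * i ≤ l.val then vegaW i μ ν (Sum.inl l) else 0 :=
      Finset.sum_congr rfl (fun l _ => if_congr ((adj_inr_inl i 4 l).trans (by simp)) rfl rfl)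
    rw [e1]
    exact sumHi i μ ν hi hν
  rw [hL, Fin.sum_univ_eight]
  simp only [vega_adj, base_rr, ne_eq, Sum.inr.injEq]
  norm_num
  simp only [vegaW, vegaW00, vegaF, vegaG]
  norm_num
  try simp
  push_cast
  omega

lemma degsum_r5 (i μ ν : ℕ) (hi : 2 ≤ i) (hμ : μ ≤ 1) (hν : ν ≤ 1)
    (hz : 0 < vegaW i μ ν (Sum.inr 5)) :
    (∑ a : Fin (3 * i - 1) ⊕ Fin 8, if (vega i).Adj (Sum.inr 5) a then vegaW i μ ν a else 0)
      = 9 * (i : ℤ) - 6 - μ - ν := by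
  rw [Fintype.sum_sum_type]
  have hL : (∑ l : Fin (3 * i - 1),
      if (vega i).Adj (Sum.inr 5) (Sum.inl l) then vegaW i μ ν (Sum.inl l) else 0)
      = 3 * (i : ℤ) - 2 := by
    have e1 : (∑ l : Fin (3 * i - 1),
        if (vega i).Adj (Sum.inr 5) (Sum.inl l) then vegaW i μ ν (Sum.inl l) else 0)
        = ∑ l : Fin (3 * i - 1), if l.val < i then vegaW i μ ν (Sum.inl l) else 0 :=
      Finset.sum_congr rfl (fun l _ => if_congr ((adj_inr_inl i 5 l).trans (by simp)) rfl rfl)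
    rw [e1]
    exact sumLo i μ ν hi hν
  rw [hL, Fin.sum_univ_eight]
  simp only [vega_adj, base_rr, ne_eq, Sum.inr.injEq]
  norm_num
  simp only [vegaW, vegaW00, vegaF, vegaG]
  norm_num
  try simp
  push_cast
  omega

lemma degsum_r6 (i μ ν : ℕ) (hi : 2 ≤ i) (hμ : μ ≤ 1) (hν : ν ≤ 1)
    (hz : 0 < vegaW i μ ν (Sum.inr 6)) :
    (∑ a : Fin (3 * i - 1) ⊕ Fin 8, if (vega i).Adj (Sum.inr 6) a then vegaW i μ ν a else 0)
      = 9 * (i : ℤ) - 6 - μ - ν := by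
  rw [Fintype.sum_sum_type]
  have hL : (∑ l : Fin (3 * i - 1),
      if (vega i).Adj (Sum.inr 6) (Sum.inl l) then vegaW i μ ν (Sum.inl l) else 0)
      = 3 * (i : ℤ) - 2 - ν := by
    have e1 : (∑ l : Fin (3 * i - 1),
        if (vega i).Adj (Sum.inr 6) (Sum.inl l) then vegaW i μ ν (Sum.inl l) else 0)
        = ∑ l : Fin (3 * i - 1), if i ≤ l.val ∧ l.val < 2 * i then vegaW i μ ν (Sum.inl l) else 0 :=
      Finset.sum_congr rfl (fun l _ => if_congr ((adj_inr_inl i 6 l).trans (by simp)) rfl rfl)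
    rw [e1]
    exact sumMid i μ ν hi hν
  rw [hL, Fin.sum_univ_eight]
  simp only [vega_adj, base_rr, ne_eq, Sum.inr.injEq]
  norm_num
  simp only [vegaW, vegaW00, vegaF, vegaG]
  norm_num
  try simp
  push_cast
  omega

lemma degsum_r7 (i μ ν : ℕ) (hi : 2 ≤ i) (hμ : μ ≤ 1) (hν : ν ≤ 1)
    (hz : 0 < vegaW i μ ν (Sum.inr 7)) :
    (∑ a : Fin (3 * i - 1) ⊕ Fin 8, if (vega i).Adj (Sum.inr 7) a then vegaW i μ ν a else 0)
      = 9 * (i : ℤ) - 6 - μ - ν := by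
  rw [Fintype.sum_sum_type]
  have hL : (∑ l : Fin (3 * i - 1),
      if (vega i).Adj (Sum.inr 7) (Sum.inl l) then vegaW i μ ν (Sum.inl l) else 0)
      = 3 * (i : ℤ) - 3 := by
    have e1 : (∑ l : Fin (3 * i - 1),
        if (vega i).Adj (Sum.inr 7) (Sum.inl l) then vegaW i μ ν (Sum.inl l) else 0)
        = ∑ l : Fin (3 * i - 1), if 2 * i ≤ l.val then vegaW i μ ν (Sum.inl l) else 0 :=
      Finset.sum_congr rfl (fun l _ => if_congr ((adj_inr_inl i 7 l).trans (by simp)) rfl rfl)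
    rw [e1]
    exact sumHi i μ ν hi hν
  rw [hL, Fin.sum_univ_eight]
  simp only [vega_adj, base_rr, ne_eq, Sum.inr.injEq]
  norm_num
  simp only [vegaW, vegaW00, vegaF, vegaG]
  norm_num
  try simp
  push_cast
  omega

end Aux6

section Aux7
open scoped Classical

lemma degsum (i μ ν : ℕ) (hi : 2 ≤ i) (hμ : μ ≤ 1) (hν : ν ≤ 1)
    (z : Fin (3 * i - 1) ⊕ Fin 8) (hz : 0 < vegaW i μ ν z) :
    (∑ a : Fin (3 * i - 1) ⊕ Fin 8, if (vega i).Adj z a then vegaW i μ ν a else 0)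
      = 9 * (i : ℤ) - 6 - μ - ν := by
  rcases z with j | h
  · exact degsum_l i μ ν hi hμ hν j hz
  · fin_cases h
    · exact degsum_r0 i μ ν hi hμ hν hz
    · exact degsum_r1 i μ ν hi hμ hν hz
    · exact degsum_r2 i μ ν hi hμ hν hz
    · exact degsum_r3 i μ ν hi hμ hν hz
    · exact degsum_r4 i μ ν hi hμ hν hz
    · exact degsum_r5 i μ ν hi hμ hν hz
    · exact degsum_r6 i μ ν hi hμ hν hz
    · exact degsum_r7 i μ ν hi hμ hν hz

lemma sumAllL (i μ ν : ℕ) (hi : 2 ≤ i) :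
    (∑ l : Fin (3 * i - 1), vegaW i μ ν (Sum.inl l)) = 9 * (i : ℤ) - 7 - ν := by
  have e1 : (∑ l : Fin (3 * i - 1), vegaW i μ ν (Sum.inl l))
      = ∑ l : Fin (3 * i - 1),
          if (fun _ : ℕ => True) l.val then vegaW i μ ν (Sum.inl l) else 0 := by simp
  rw [e1, engine i μ ν hi (fun _ => True)]
  rw [Finset.filter_true_of_mem (fun _ _ => trivial), Finset.card_range]
  simp only [if_pos trivial]
  push_cast
  omega

lemma sumAllR (i μ ν : ℕ) (hi : 2 ≤ i) :
    (∑ h : Fin 8, vegaW i μ ν (Sum.inr h)) = 18 * (i : ℤ) - 12 - 3 * μ - 2 * ν := by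
  rw [Fin.sum_univ_eight]
  simp only [vegaW, vegaW00, vegaF, vegaG]
  norm_num
  simp (config := { decide := true }) only [false_or, true_or, or_true, if_true, if_false,
    false_and, true_and, and_true, and_false, or_false]
  push_cast
  omega

end Aux7


open scoped Classical in
/-- For i ≥ 2 and μ, ν ∈ {0,1}, the weighted blow-up G_i^{μν} of the Vega graph
Υ_i^{μν} by the weight ω_{μν} (vertices of weight 0 being the deleted ones) is a
k-regular graph on 3k-1 vertices, where k = 9i - (6+μ+ν). -/
theorem stmt_15 (i μ ν : ℕ) (hi : 2 ≤ i) (hμ : μ ≤ 1) (hν : ν ≤ 1) :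
    ((vega i).blowup fun z => (vegaW i μ ν z).toNat).IsRegularOfDegree
        (9 * i - (6 + μ + ν)) ∧
      Fintype.card (Σ z, Fin ((vegaW i μ ν z).toNat))
        = 3 * (9 * i - (6 + μ + ν)) - 1 := by
  constructor
  · intro v
    have hz : 0 < vegaW i μ ν v.1 := by
      have := v.2.isLt
      omega
    rw [blowup_degree (vega i) (fun z => (vegaW i μ ν z).toNat) v]
    have h1 : ((∑ a ∈ Finset.univ.filter ((vega i).Adj v.1), (vegaW i μ ν a).toNat : ℕ) : ℤ)
        = 9 * (i : ℤ) - 6 - μ - ν := by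
      calc ((∑ a ∈ Finset.univ.filter ((vega i).Adj v.1), (vegaW i μ ν a).toNat : ℕ) : ℤ)
          = ∑ a ∈ Finset.univ.filter ((vega i).Adj v.1), ((vegaW i μ ν a).toNat : ℤ) :=
            Nat.cast_sum _ _
        _ = ∑ a ∈ Finset.univ.filter ((vega i).Adj v.1), vegaW i μ ν a :=
            Finset.sum_congr rfl
              (fun a _ => Int.toNat_of_nonneg (vegaW_nonneg i μ ν hi hμ hν a))
        _ = ∑ a : Fin (3 * i - 1) ⊕ Fin 8,
              if (vega i).Adj v.1 a then vegaW i μ ν a else 0 := Finset.sum_filter _ _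
        _ = 9 * (i : ℤ) - 6 - μ - ν := degsum i μ ν hi hμ hν v.1 hz
    omega
  · rw [Fintype.card_sigma]
    simp only [Fintype.card_fin]
    have h2 : ((∑ z : Fin (3 * i - 1) ⊕ Fin 8, (vegaW i μ ν z).toNat : ℕ) : ℤ)
        = 27 * (i : ℤ) - 19 - 3 * μ - 3 * ν := by
      calc ((∑ z : Fin (3 * i - 1) ⊕ Fin 8, (vegaW i μ ν z).toNat : ℕ) : ℤ)
          = ∑ z : Fin (3 * i - 1) ⊕ Fin 8, ((vegaW i μ ν z).toNat : ℤ) := Nat.cast_sum _ _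
        _ = ∑ z : Fin (3 * i - 1) ⊕ Fin 8, vegaW i μ ν z :=
            Finset.sum_congr rfl
              (fun a _ => Int.toNat_of_nonneg (vegaW_nonneg i μ ν hi hμ hν a))
        _ = (∑ l : Fin (3 * i - 1), vegaW i μ ν (Sum.inl l))
              + ∑ h : Fin 8, vegaW i μ ν (Sum.inr h) := Fintype.sum_sum_type _
        _ = 27 * (i : ℤ) - 19 - 3 * μ - 3 * ν := by
            rw [sumAllL i μ ν hi, sumAllR i μ ν hi]; ring
    omega
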